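/- Let T ≤ T' be binary trees of size n in the Tamari order and let IP[T,T'] be the poset on {1,…,n} whose relations are exactly those of dec(T) together with those of inc(T'). Then the linear extensions of IP[T,T'] are exactly the linear extensions of the trees in the Tamari interval [T,T']: ExtL(IP[T,T']) = ⋃_{T ≤ S ≤ T'} ExtL(S). -/

import Mathlib

open Polynomial

/-- A binary tree: either the empty tree or a pair of binary trees
(left and right subtrees) grafted on an internal node. -/
inductive BinTree : Type
  | leaf : BinTree
  | node : BinTree → BinTree → BinTree

namespace BinTree

/-- The size of a binary tree: its number of internal nodes. -/
def size : BinTree → ℕ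
  | leaf => 0
  | node l r => l.size + r.size + 1

/-- One right rotation somewhere in the tree: `Rot T T'` means that `T'` is obtained
from `T` by replacing one subtree of the form `y(x(A,B),C)` by `x(A,y(B,C))`. -/
inductive Rot : BinTree → BinTree → Prop
  | root (A B C : BinTree) : Rot (node (node A B) C) (node A (node B C))
  | left {L L' : BinTree} (R : BinTree) : Rot L L' → Rot (node L R) (node L' R)
  | right (L : BinTree) {R R' : BinTree} : Rot R R' → Rot (node L R) (node L R')

/-- The Tamari order: `TamariLE T T'` iff `T'` is obtained from `T` by a (possibly empty)
sequence of right rotations. -/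
def TamariLE (T T' : BinTree) : Prop := Relation.ReflTransGen Rot T T'

/-- The Tamari polynomial `B_T ∈ ℤ[x]`: `B_∅ = 1` and for `T = x(L,R)`, `B_T` is the
unique polynomial with `(x-1)·B_T = x·B_L·(x·B_R - B_R(1))` (exact division by the
monic polynomial `X - 1`, the right-hand side vanishing at `x = 1`). -/
noncomputable def tamPoly : BinTree → Polynomial ℤ
  | leaf => 1
  | node l r =>
      (X * tamPoly l * (X * tamPoly r - C ((tamPoly r).eval 1))) /ₘ (X - C 1)

/-- The mirror Tamari polynomial, obtained by exchanging the roles of the left and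
right subtrees in the recursive definition of the Tamari polynomial. -/
noncomputable def tamPolyMirror : BinTree → Polynomial ℤ
  | leaf => 1
  | node l r =>
      (X * tamPolyMirror r * (X * tamPolyMirror l - C ((tamPolyMirror l).eval 1))) /ₘ (X - C 1)

/-- The number of nodes on the left border of a binary tree. -/
def leftBorder : BinTree → ℕ
  | leaf => 0
  | node l _ => l.leftBorder + 1

/-- The number of nodes on the right border of a binary tree. -/
def rightBorder : BinTree → ℕ
  | leaf => 0
  | node _ r => r.rightBorder + 1

/-- `inSub T a b`: in the unique binary-search-tree labelling of `T` by `1,…,size T`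
(all labels of the left subtree of a node are smaller than its label, all labels of its
right subtree are larger), the node labelled `a` belongs to the subtree rooted at the
node labelled `b` (in particular `inSub T a a` holds for every node label `a`). -/
def inSub : BinTree → ℕ → ℕ → Prop
  | leaf => fun _ _ => False
  | node l r => fun a b =>
      (b = l.size + 1 ∧ 1 ≤ a ∧ a ≤ l.size + r.size + 1) ∨
      inSub l a b ∨
      (l.size + 1 < a ∧ l.size + 1 < b ∧ inSub r (a - (l.size + 1)) (b - (l.size + 1)))

/-- The binary search tree poset of `T`: `bstRel T a b` iff `a ≺_T b`, i.e. `a ≠ b` and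
the node labelled `a` is in the subtree rooted at the node labelled `b`. -/
def bstRel (T : BinTree) (a b : ℕ) : Prop := a ≠ b ∧ inSub T a b

/-- The increasing forest `inc(T)`: `a ≺ b` iff `a < b` and `a ≺_T b`. -/
def incRel (T : BinTree) (a b : ℕ) : Prop := a < b ∧ bstRel T a b

/-- The decreasing forest `dec(T)`: `b ≺ a` iff `b > a` and `b ≺_T a`. -/
def decRel (T : BinTree) (a b : ℕ) : Prop := b < a ∧ bstRel T a b

/-- The relations of the interval-poset `IP[T,T']`: exactly those of `dec(T)`
together with those of `inc(T')`. -/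
def IPrel (T T' : BinTree) (a b : ℕ) : Prop := decRel T a b ∨ incRel T' a b

end BinTree

open BinTree

/-- `σ` is a linear extension of the strict relation `rel` on `{1,…,n}`: reading the word
`σ(1)…σ(n)` (the `i`-th letter being the label `(σ i : ℕ) + 1`), whenever `rel a b` holds
the letter `a` appears before the letter `b`. -/
def IsLinExt (n : ℕ) (rel : ℕ → ℕ → Prop) (σ : Equiv.Perm (Fin n)) : Prop :=
  ∀ i j : Fin n, rel ((σ i : ℕ) + 1) ((σ j : ℕ) + 1) → i < j

/-- An interval-poset of size `n`: a (strict) poset on `{1,…,n}` such that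
`a ≺ c` implies `b ≺ c` for all `a < b < c`, and `c ≺ a` implies `b ≺ a` for all
`a < b < c`. -/
def IsIntervalPoset (n : ℕ) (rel : ℕ → ℕ → Prop) : Prop :=
  (∀ a b, rel a b → 1 ≤ a ∧ a ≤ n ∧ 1 ≤ b ∧ b ≤ n) ∧
  (∀ a, ¬ rel a a) ∧
  (∀ a b c, rel a b → rel b c → rel a c) ∧
  (∀ a b c, a < b → b < c → rel a c → rel b c) ∧
  (∀ a b c, a < b → b < c → rel c a → rel b a)

/-- `trees(P)` : the number of connected components of the forest formed by the decreasing
relations of `P`, i.e. the number of `k ∈ {1,…,n}` such that there is no `j < k`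
with `k ≺_P j`. -/
noncomputable def treeStat (n : ℕ) (rel : ℕ → ℕ → Prop) : ℕ :=
  Set.ncard {k : ℕ | 1 ≤ k ∧ k ≤ n ∧ ∀ j, j < k → ¬ rel k j}

/-- The composition `𝔹(I1,I2)` of two interval-posets of sizes `k1` and `k2`:
the set of interval-posets `I` of size `k1+k2+1` such that
(i) the relations of `I` among `1,…,k1` are exactly those of `I1`,
(ii) the relations of `I` among `k1+2,…,k1+k2+1` are exactly those of `I2` shifted
by `k1+1`, (iii) `i ≺_I k1+1` for all `i ≤ k1`, and (iv) there is no relation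
`k1+1 ≺_I j` for `j > k1+1`. -/
def Comp (k1 k2 : ℕ) (I1 I2 : ℕ → ℕ → Prop) : Set (ℕ → ℕ → Prop) :=
  {I | IsIntervalPoset (k1 + k2 + 1) I ∧
    (∀ a b, 1 ≤ a → a ≤ k1 → 1 ≤ b → b ≤ k1 → (I a b ↔ I1 a b)) ∧
    (∀ a b, k1 + 2 ≤ a → a ≤ k1 + k2 + 1 → k1 + 2 ≤ b → b ≤ k1 + k2 + 1 →
      (I a b ↔ I2 (a - (k1 + 1)) (b - (k1 + 1)))) ∧
    (∀ i, 1 ≤ i → i ≤ k1 → I i (k1 + 1)) ∧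
    (∀ j, k1 + 1 < j → ¬ I (k1 + 1) j)}

/-- The co-inversions of a permutation `σ` of `{1,…,n}` (written as the word
`σ(1)…σ(n)`): pairs `(σ(i), σ(j))` with `i < j` and `σ(i) > σ(j)`. -/
def coinv (n : ℕ) (σ : Equiv.Perm (Fin n)) : Set (Fin n × Fin n) :=
  {p | ∃ i j : Fin n, i < j ∧ σ j < σ i ∧ p = (σ i, σ j)}


namespace TamariAux

open BinTree List

lemma inSub_bounds : ∀ (T : BinTree) {a b : ℕ}, inSub T a b →
    1 ≤ a ∧ a ≤ T.size ∧ 1 ≤ b ∧ b ≤ T.size := by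
  intro T
  induction T with
  | leaf => intro a b h; exact absurd h (by simp [inSub])
  | node l r ihl ihr =>
    intro a b h
    rcases h with ⟨hb, h1, h2⟩ | h | ⟨ha, hb, h⟩
    · simp only [size]; omega
    · have := ihl h; simp only [size]; omega
    · have := ihr h; simp only [size]; omega

lemma size_rot {T U : BinTree} (h : Rot T U) : T.size = U.size := by
  induction h with
  | root A B C => simp only [size]; omega
  | left R h ih => simp only [size]; omega
  | right L h ih => simp only [size]; omega

lemma size_tamari {T U : BinTree} (h : TamariLE T U) : T.size = U.size := by
  induction h with
  | refl => rfl
  | tail _ hrot ih => exact ih.trans (size_rot hrot)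

lemma tamari_node {L L' R R' : BinTree} (hL : TamariLE L L') (hR : TamariLE R R') :
    TamariLE (node L R) (node L' R') := by
  have h1 : TamariLE (node L R) (node L' R) :=
    Relation.ReflTransGen.lift (fun X => node X R) (fun _ _ hr => Rot.left R hr) _ _ hL
  have h2 : TamariLE (node L' R) (node L' R') :=
    Relation.ReflTransGen.lift (fun X => node L' X) (fun _ _ hr => Rot.right L' hr) _ _ hR
  exact h1.trans h2

lemma size_eq_zero {T : BinTree} (h : T.size = 0) : T = leaf := by
  cases T with
  | leaf => rfl
  | node l r => simp only [size] at h; omega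

lemma inSub_rot_dec {T U : BinTree} (h : Rot T U) :
    ∀ a b, b < a → inSub T a b → inSub U a b := by
  induction h with
  | root A B C =>
    intro a b hba hs
    simp only [inSub, size] at hs ⊢
    rcases hs with ⟨hb, h1, h2⟩ | (⟨hb, h1, h2⟩ | hA | ⟨h1, h2, hB⟩) | ⟨h1, h2, hC⟩
    · exact Or.inr (Or.inr ⟨by omega, by omega, Or.inl ⟨by omega, by omega, by omega⟩⟩)
    · exact Or.inl ⟨hb, by omega, by omega⟩
    · exact Or.inr (Or.inl hA)
    · exact Or.inr (Or.inr ⟨h1, h2, Or.inr (Or.inl hB)⟩)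
    · refine Or.inr (Or.inr ⟨by omega, by omega, Or.inr (Or.inr ⟨by omega, by omega, ?_⟩)⟩)
      have e1 : a - (A.size + 1) - (B.size + 1) = a - (A.size + B.size + 1 + 1) := by omega
      have e2 : b - (A.size + 1) - (B.size + 1) = b - (A.size + B.size + 1 + 1) := by omega
      rw [e1, e2]; exact hC
  | left R hrot ih =>
    intro a b hba hs
    have hsz := size_rot hrot
    simp only [inSub] at hs ⊢
    rw [← hsz]
    rcases hs with h | hL | h
    · exact Or.inl h
    · exact Or.inr (Or.inl (ih a b hba hL))
    · exact Or.inr (Or.inr h)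
  | right L hrot ih =>
    intro a b hba hs
    simp only [inSub] at hs ⊢
    rcases hs with ⟨hb, h1, h2⟩ | hL | ⟨h1, h2, hR⟩
    · have hsz := size_rot hrot
      exact Or.inl ⟨hb, by omega, by omega⟩
    · exact Or.inr (Or.inl hL)
    · exact Or.inr (Or.inr ⟨h1, h2, ih _ _ (by omega) hR⟩)

lemma inSub_rot_inc {U T' : BinTree} (h : Rot U T') :
    ∀ a b, a < b → inSub T' a b → inSub U a b := by
  induction h with
  | root A B C =>
    intro a b hab hs
    simp only [inSub, size] at hs ⊢
    rcases hs with ⟨hb, h1, h2⟩ | hA | ⟨h1, h2, (⟨hb, h3, h4⟩ | hB | ⟨h3, h4, hC⟩)⟩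
    · exact Or.inr (Or.inl (Or.inl ⟨hb, by omega, by omega⟩))
    · exact Or.inr (Or.inl (Or.inr (Or.inl hA)))
    · exact Or.inl ⟨by omega, by omega, by omega⟩
    · exact Or.inr (Or.inl (Or.inr (Or.inr ⟨h1, h2, hB⟩)))
    · refine Or.inr (Or.inr ⟨by omega, by omega, ?_⟩)
      have e1 : a - (A.size + 1) - (B.size + 1) = a - (A.size + B.size + 1 + 1) := by omega
      have e2 : b - (A.size + 1) - (B.size + 1) = b - (A.size + B.size + 1 + 1) := by omega
      rw [e1, e2] at hC; exact hC
  | left R hrot ih =>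
    intro a b hab hs
    have hsz := size_rot hrot
    simp only [inSub] at hs ⊢
    rw [hsz]
    rcases hs with h | hL | h
    · exact Or.inl h
    · exact Or.inr (Or.inl (ih a b hab hL))
    · exact Or.inr (Or.inr h)
  | right L hrot ih =>
    intro a b hab hs
    simp only [inSub] at hs ⊢
    rcases hs with ⟨hb, h1, h2⟩ | hL | ⟨h1, h2, hR⟩
    · have hsz := size_rot hrot
      exact Or.inl ⟨hb, by omega, by omega⟩
    · exact Or.inr (Or.inl hL)
    · exact Or.inr (Or.inr ⟨h1, h2, ih _ _ (by omega) hR⟩)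

lemma dec_tamari {T S : BinTree} (h : TamariLE T S) {a b : ℕ}
    (hd : decRel T a b) : decRel S a b := by
  induction h with
  | refl => exact hd
  | tail _ hrot ih =>
    exact ⟨ih.1, ih.2.1, inSub_rot_dec hrot _ _ ih.1 ih.2.2⟩

lemma inc_tamari {S T' : BinTree} (h : TamariLE S T') {a b : ℕ}
    (hi : incRel T' a b) : incRel S a b := by
  induction h using Relation.ReflTransGen.head_induction_on with
  | refl => exact hi
  | head hrot _ ih =>
    exact ⟨ih.1, ih.2.1, inSub_rot_inc hrot _ _ ih.1 ih.2.2⟩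

end TamariAux

namespace TamariAux

def rsplit : BinTree → ℕ → BinTree × BinTree
  | .leaf, _ => (.leaf, .leaf)
  | .node l r, k =>
      if k = l.size + 1 then (l, r)
      else (.node l (rsplit r (k - (l.size + 1))).1, (rsplit r (k - (l.size + 1))).2)

def lsplit : BinTree → ℕ → BinTree × BinTree
  | .leaf, _ => (.leaf, .leaf)
  | .node l r, k =>
      if k = l.size + 1 then (l, r)
      else ((lsplit l k).1, .node (lsplit l k).2 r)

lemma rsplit_spec : ∀ (T : BinTree) (k : ℕ), 1 ≤ k → k ≤ T.size →
    (∀ b, ¬ incRel T k b) →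
    (rsplit T k).1.size = k - 1 ∧ (rsplit T k).2.size = T.size - k ∧
    TamariLE (node (rsplit T k).1 (rsplit T k).2) T ∧
    (∀ a b, incRel (rsplit T k).1 a b → incRel T a b) ∧
    (∀ a b, incRel (rsplit T k).2 a b → incRel T (a + k) (b + k)) := by
  intro T
  induction T with
  | leaf => intro k h1 h2 _; simp only [size] at h2; omega
  | node l r ihl ihr =>
    intro k h1 h2 h3
    have hsz : (node l r).size = l.size + r.size + 1 := rfl
    by_cases hk : k = l.size + 1
    · simp only [rsplit, if_pos hk]
      refine ⟨by omega, by omega, ?_, ?_, ?_⟩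
      · exact Relation.ReflTransGen.refl
      · rintro a b ⟨hab, hne, hsub⟩
        exact ⟨hab, hne, Or.inr (Or.inl hsub)⟩
      · rintro a b ⟨hab, hne, hsub⟩
        obtain ⟨ha1, ha2, hb1, hb2⟩ := inSub_bounds r hsub
        refine ⟨by omega, by omega, Or.inr (Or.inr ⟨by omega, by omega, ?_⟩)⟩
        have e1 : a + k - (l.size + 1) = a := by omega
        have e2 : b + k - (l.size + 1) = b := by omega
        rw [e1, e2]; exact hsub
    · have hkm : l.size + 1 < k := by
        rcases Nat.lt_or_ge k (l.size + 1) with hlt | hge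
        · exfalso
          exact h3 (l.size + 1) ⟨hlt, by omega, Or.inl ⟨rfl, by omega, by omega⟩⟩
        · omega
      have h3r : ∀ b, ¬ incRel r (k - (l.size + 1)) b := by
        rintro b ⟨hblt, hbne, hbsub⟩
        obtain ⟨ha1, ha2, hb1, hb2⟩ := inSub_bounds r hbsub
        refine h3 (b + (l.size + 1)) ⟨by omega, by omega,
          Or.inr (Or.inr ⟨by omega, by omega, ?_⟩)⟩
        have e2 : b + (l.size + 1) - (l.size + 1) = b := by omega
        rw [e2]; exact hbsub
      obtain ⟨s1, s2, htam, hi1, hi2⟩ := ihr (k - (l.size + 1)) (by omega) (by omega) h3r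
      simp only [rsplit, if_neg hk]
      refine ⟨?_, ?_, ?_, ?_, ?_⟩
      · simp only [size]; omega
      · simp only [size] at *; omega
      · exact Relation.ReflTransGen.head (Rot.root _ _ _)
          (tamari_node Relation.ReflTransGen.refl htam)
      · rintro a b ⟨hab, hne, hsub⟩
        rcases hsub with ⟨hb, hb1, hb2⟩ | hL | ⟨ha', hb', hsub⟩
        · exact ⟨hab, hne, Or.inl ⟨hb, by omega, by omega⟩⟩
        · exact ⟨hab, hne, Or.inr (Or.inl hL)⟩
        · have := hi1 _ _ ⟨by omega, by omega, hsub⟩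
          exact ⟨hab, hne, Or.inr (Or.inr ⟨by omega, by omega, this.2.2⟩)⟩
      · intro a b hab
        have := hi2 a b hab
        obtain ⟨h5, h6, hsub⟩ := this
        obtain ⟨ha1, ha2, hb1, hb2⟩ := inSub_bounds r hsub
        refine ⟨by omega, by omega, Or.inr (Or.inr ⟨by omega, by omega, ?_⟩)⟩
        have e1 : a + k - (l.size + 1) = a + (k - (l.size + 1)) := by omega
        have e2 : b + k - (l.size + 1) = b + (k - (l.size + 1)) := by omega
        rw [e1, e2]; exact hsub

lemma lsplit_spec : ∀ (T : BinTree) (k : ℕ), 1 ≤ k → k ≤ T.size →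
    (∀ b, ¬ decRel T k b) →
    (lsplit T k).1.size = k - 1 ∧ (lsplit T k).2.size = T.size - k ∧
    TamariLE T (node (lsplit T k).1 (lsplit T k).2) ∧
    (∀ a b, decRel (lsplit T k).1 a b → decRel T a b) ∧
    (∀ a b, decRel (lsplit T k).2 a b → decRel T (a + k) (b + k)) := by
  intro T
  induction T with
  | leaf => intro k h1 h2 _; simp only [size] at h2; omega
  | node l r ihl ihr =>
    intro k h1 h2 h3
    have hsz : (node l r).size = l.size + r.size + 1 := rfl
    by_cases hk : k = l.size + 1
    · simp only [lsplit, if_pos hk]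
      refine ⟨by omega, by omega, Relation.ReflTransGen.refl, ?_, ?_⟩
      · rintro a b ⟨hab, hne, hsub⟩
        exact ⟨hab, hne, Or.inr (Or.inl hsub)⟩
      · rintro a b ⟨hab, hne, hsub⟩
        obtain ⟨ha1, ha2, hb1, hb2⟩ := inSub_bounds r hsub
        refine ⟨by omega, by omega, Or.inr (Or.inr ⟨by omega, by omega, ?_⟩)⟩
        have e1 : a + k - (l.size + 1) = a := by omega
        have e2 : b + k - (l.size + 1) = b := by omega
        rw [e1, e2]; exact hsub
    · have hkm : k < l.size + 1 := by
        rcases Nat.lt_or_ge k (l.size + 1) with hlt | hge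
        · exact hlt
        · exfalso
          exact h3 (l.size + 1) ⟨by omega, by omega, Or.inl ⟨rfl, by omega, by omega⟩⟩
      have h3l : ∀ b, ¬ decRel l k b := by
        intro b hb
        exact h3 b ⟨hb.1, hb.2.1, Or.inr (Or.inl hb.2.2)⟩
      obtain ⟨s1, s2, htam, hd1, hd2⟩ := ihl k h1 (by omega) h3l
      simp only [lsplit, if_neg hk]
      refine ⟨s1, ?_, ?_, ?_, ?_⟩
      · simp only [size] at *; omega
      · exact (tamari_node htam Relation.ReflTransGen.refl).trans
          (Relation.ReflTransGen.single (Rot.root _ _ _))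
      · rintro a b hd
        have := hd1 a b hd
        exact ⟨this.1, this.2.1, Or.inr (Or.inl this.2.2)⟩
      · rintro a b ⟨hab, hne, hsub⟩
        rcases hsub with ⟨hb, hb1, hb2⟩ | hQ | ⟨ha', hb', hsub⟩
        · exact ⟨by omega, by omega, Or.inl ⟨by omega, by omega, by omega⟩⟩
        · have := hd2 a b ⟨hab, hne, hQ⟩
          exact ⟨this.1, this.2.1, Or.inr (Or.inl this.2.2)⟩
        · refine ⟨by omega, by omega, Or.inr (Or.inr ⟨by omega, by omega, ?_⟩)⟩
          have e1 : a + k - (l.size + 1) = a - ((lsplit l k).2.size + 1) := by omega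
          have e2 : b + k - (l.size + 1) = b - ((lsplit l k).2.size + 1) := by omega
          rw [e1, e2]; exact hsub

end TamariAux

namespace TamariAux

def treeOf : List ℕ → BinTree
  | [] => .leaf
  | r :: t =>
      .node (treeOf (t.filter (fun x => decide (x < r))))
            (treeOf ((t.filter (fun x => decide (r < x))).map (fun x => x - r)))
termination_by v => v.length
decreasing_by
  · simp only [List.length_cons]
    exact Nat.lt_succ_of_le (by simp only [List.length_unattach]; exact (List.length_filter_le _ _).trans (le_of_eq List.length_attach))
  · simp only [List.length_map, List.length_cons]
    exact Nat.lt_succ_of_le ((List.length_filter_le _ _).trans (le_of_eq List.length_attach))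

lemma range'_split {r n : ℕ} (h1 : 1 ≤ r) (h2 : r ≤ n) :
    List.range' 1 n = List.range' 1 (r - 1) ++ r :: List.range' (r + 1) (n - r) := by
  have h3 := List.range'_append_1 (s := 1) (m := r - 1) (n := (n - r) + 1)
  rw [show (r - 1) + (n - r + 1) = n from by omega] at h3
  rw [show 1 + (r - 1) = r from by omega, List.range'_succ] at h3
  exact h3.symm

lemma perm_step {v : List ℕ} {n r : ℕ} {t : List ℕ}
    (h : v.Perm (List.range' 1 n)) (he : v = r :: t) :
    1 ≤ r ∧ r ≤ n ∧
    (t.filter (fun x => decide (x < r))).Perm (List.range' 1 (r - 1)) ∧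
    ((t.filter (fun x => decide (r < x))).map (fun x => x - r)).Perm
      (List.range' 1 (n - r)) := by
  subst he
  have hrmem : r ∈ List.range' 1 n := h.subset (List.mem_cons_self (a := r) (l := t))
  rw [List.mem_range'_1] at hrmem
  have hr1 : 1 ≤ r := hrmem.1
  have hr2 : r ≤ n := by omega
  have hsplit := range'_split hr1 hr2
  have hlt : (t.filter (fun x => decide (x < r))).Perm (List.range' 1 (r - 1)) := by
    have p1 := h.filter (fun x => decide (x < r))
    have hcons : (r :: t).filter (fun x => decide (x < r)) =
        t.filter (fun x => decide (x < r)) := by simp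
    rw [hcons, hsplit, List.filter_append] at p1
    have e1 : (List.range' 1 (r - 1)).filter (fun x => decide (x < r)) =
        List.range' 1 (r - 1) := by
      apply List.filter_eq_self.2
      intro x hx
      rw [List.mem_range'_1] at hx
      simp only [decide_eq_true_eq]
      omega
    have e2 : (r :: List.range' (r + 1) (n - r)).filter (fun x => decide (x < r)) = [] := by
      apply List.filter_eq_nil_iff.2
      intro x hx
      rcases List.mem_cons.1 hx with h' | h'
      · subst h'; simp
      · rw [List.mem_range'_1] at h'
        simp only [decide_eq_true_eq]
        omega
    rw [e1, e2, List.append_nil] at p1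
    exact p1
  have hgt : (t.filter (fun x => decide (r < x))).Perm (List.range' (r + 1) (n - r)) := by
    have p1 := h.filter (fun x => decide (r < x))
    have hcons : (r :: t).filter (fun x => decide (r < x)) =
        t.filter (fun x => decide (r < x)) := by simp
    rw [hcons, hsplit, List.filter_append] at p1
    have e1 : (List.range' 1 (r - 1)).filter (fun x => decide (r < x)) = [] := by
      apply List.filter_eq_nil_iff.2
      intro x hx
      rw [List.mem_range'_1] at hx
      simp only [decide_eq_true_eq]
      omega
    have e2 : (r :: List.range' (r + 1) (n - r)).filter (fun x => decide (r < x)) =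
        List.range' (r + 1) (n - r) := by
      rw [List.filter_cons, if_neg (by simp)]
      apply List.filter_eq_self.2
      intro x hx
      rw [List.mem_range'_1] at hx
      simp only [decide_eq_true_eq]
      omega
    rw [e1, e2, List.nil_append] at p1
    exact p1
  have hmapped : (List.range' (r + 1) (n - r)).map (fun x => x - r) =
      List.range' 1 (n - r) := by
    have : List.range' (r + 1) (n - r) = (List.range' 1 (n - r)).map (fun x => r + x) :=
      (List.map_add_range' (a := r) 1 (n - r) 1).symm
    rw [this, List.map_map]
    have : ((fun x => x - r) ∘ fun x => r + x) = id := by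
      funext x; simp only [Function.comp_apply, id_eq]; omega
    rw [this, List.map_id]
  refine ⟨hr1, hr2, hlt, ?_⟩
  rw [← hmapped]
  exact hgt.map _

lemma size_treeOf : ∀ (m : ℕ) (v : List ℕ) (n : ℕ), v.length ≤ m →
    v.Perm (List.range' 1 n) → (treeOf v).size = n := by
  intro m
  induction m with
  | zero =>
    intro v n hl hp
    have hv : v = [] := List.eq_nil_of_length_eq_zero (by omega)
    subst hv
    have := hp.length_eq
    simp only [List.length_nil, List.length_range'] at this
    rw [treeOf, ← this]; rfl
  | succ m ih =>
    intro v n hl hp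
    cases v with
    | nil =>
      have := hp.length_eq
      simp only [List.length_nil, List.length_range'] at this
      rw [treeOf, ← this]; rfl
    | cons r t =>
      obtain ⟨h1, h2, pl, pr⟩ := perm_step hp rfl
      simp only [List.length_cons] at hl
      have s1 := ih (t.filter (fun x => decide (x < r))) (r - 1)
        (le_trans (List.length_filter_le _ _) (by omega)) pl
      have s2 := ih ((t.filter (fun x => decide (r < x))).map (fun x => x - r)) (n - r)
        (le_trans (le_of_eq (List.length_map _)) (le_trans (List.length_filter_le _ _) (by omega))) pr
      rw [treeOf]
      simp only [BinTree.size, s1, s2]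
      omega

def RExt (v : List ℕ) (rel : ℕ → ℕ → Prop) : Prop :=
  ∀ i j : Fin v.length, rel (v.get i) (v.get j) → j < i

lemma RExt_mono {v : List ℕ} {rel1 rel2 : ℕ → ℕ → Prop}
    (h : ∀ a b, rel1 a b → rel2 a b) (H : RExt v rel2) : RExt v rel1 :=
  fun i j hr => H i j (h _ _ hr)

lemma RExt_sublist {u v : List ℕ} (hs : u.Sublist v) {rel : ℕ → ℕ → Prop}
    (H : RExt v rel) : RExt u rel := by
  obtain ⟨f, hf⟩ := List.sublist_iff_exists_fin_orderEmbedding_get_eq.1 hs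
  intro i j hr
  have := H (f i) (f j) (by rw [← hf, ← hf]; exact hr)
  exact f.lt_iff_lt.1 this

lemma RExt_up {u v : List ℕ} (hs : u.Sublist v) (hv : v.Nodup)
    {i j : Fin u.length} {i' j' : Fin v.length}
    (hi : v.get i' = u.get i) (hj : v.get j' = u.get j) (hij : j < i) : j' < i' := by
  obtain ⟨f, hf⟩ := List.sublist_iff_exists_fin_orderEmbedding_get_eq.1 hs
  have hi2 : i' = f i := hv.get_inj_iff.1 (by rw [hi, hf])
  have hj2 : j' = f j := hv.get_inj_iff.1 (by rw [hj, hf])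
  rw [hi2, hj2]
  exact f.lt_iff_lt.2 hij

end TamariAux

namespace TamariAux

open BinTree

lemma RExt_bst : ∀ (m : ℕ) (v : List ℕ) (n : ℕ), v.length ≤ m →
    v.Perm (List.range' 1 n) → RExt v (bstRel (treeOf v)) := by
  intro m
  induction m with
  | zero =>
    intro v n hl hp i j hr
    have hv : v = [] := List.eq_nil_of_length_eq_zero (by omega)
    subst hv
    exact absurd i.isLt (by simp)
  | succ m ih =>
    intro v n hl hp
    cases v with
    | nil => intro i j hr; exact absurd i.isLt (by simp)
    | cons r t =>
      obtain ⟨hr1, hr2, pl, pr⟩ := perm_step hp rfl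
      have hnd : (r :: t).Nodup := (hp.nodup_iff).2 (List.nodup_range' (s := 1) (n := n))
      set u1 := t.filter (fun x => decide (x < r)) with hu1
      set u2f := t.filter (fun x => decide (r < x)) with hu2f
      set u2 := u2f.map (fun x => x - r) with hu2
      have hlt : t.length ≤ m := by simp only [List.length_cons] at hl; omega
      have s1 : (treeOf u1).size = r - 1 := size_treeOf u1.length u1 _ le_rfl pl
      have s2 : (treeOf u2).size = n - r := size_treeOf u2.length u2 _ le_rfl pr
      have htv : treeOf (r :: t) = .node (treeOf u1) (treeOf u2) := by rw [treeOf]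
      have hsub1 : u1.Sublist (r :: t) :=
        (List.filter_sublist (l := t)).trans (List.sublist_cons_self r t)
      have hsub2 : u2f.Sublist (r :: t) :=
        (List.filter_sublist (l := t)).trans (List.sublist_cons_self r t)
      have hIH1 : RExt u1 (bstRel (treeOf u1)) :=
        ih u1 (r - 1) (le_trans (List.length_filter_le _ _) hlt) pl
      have hIH2 : RExt u2 (bstRel (treeOf u2)) :=
        ih u2 (n - r) (le_trans (le_of_eq (List.length_map _))
          (le_trans (List.length_filter_le _ _) hlt)) pr
      have hlc : u2.length = u2f.length := List.length_map _
      have hgm : ∀ k : Fin u2.length, u2.get k = u2f.get (Fin.cast hlc k) - r := by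
        intro k
        simp only [List.get_eq_getElem, hu2, List.getElem_map, Fin.coe_cast]
      have hmemf : ∀ k : Fin u2f.length, r < u2f.get k := by
        intro k
        have h5 : u2f.get k ∈ u2f := List.get_mem u2f k
        have h6 := List.mem_filter.1 h5
        simpa using h6.2
      intro i j hrel
      rw [htv] at hrel
      obtain ⟨hne, hsub⟩ := hrel
      rcases hsub with ⟨hb, ha1, ha2⟩ | hL | ⟨h1, h2, hR⟩
      · -- b is the root r
        have hbr : (r :: t).get j = r := by rw [hb, s1]; omega
        have hj0 : j = ⟨0, by simp⟩ := hnd.get_inj_iff.1 (by rw [hbr]; rfl)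
        have hij : i ≠ j := fun he => hne (by rw [he])
        have h0 : (j : ℕ) = 0 := by rw [hj0]
        have hi0 : (i : ℕ) ≠ (j : ℕ) := fun hv => hij (Fin.ext hv)
        exact Fin.lt_def.2 (by omega)
      · -- both in the left subtree
        have hbnd := inSub_bounds _ hL
        rw [s1] at hbnd
        obtain ⟨hA1, hA2, hB1, hB2⟩ := hbnd
        have hath : (r :: t).get i ∈ r :: t := List.get_mem _ _
        have hbth : (r :: t).get j ∈ r :: t := List.get_mem _ _
        have hau : (r :: t).get i ∈ u1 := by
          rw [hu1]
          refine List.mem_filter.2 ⟨?_, by simp only [decide_eq_true_eq]; omega⟩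
          rcases List.mem_cons.1 hath with h' | h'
          · exfalso; omega
          · exact h'
        have hbu : (r :: t).get j ∈ u1 := by
          rw [hu1]
          refine List.mem_filter.2 ⟨?_, by simp only [decide_eq_true_eq]; omega⟩
          rcases List.mem_cons.1 hbth with h' | h'
          · exfalso; omega
          · exact h'
        obtain ⟨i', hi'⟩ := List.get_of_mem hau
        obtain ⟨j', hj'⟩ := List.get_of_mem hbu
        have hlt' : j' < i' := hIH1 i' j' (by rw [hi', hj']; exact ⟨hne, hL⟩)
        exact RExt_up hsub1 hnd hi'.symm hj'.symm hlt'
      · -- both in the right subtree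
        have e : (treeOf u1).size + 1 = r := by rw [s1]; omega
        rw [e] at h1 h2 hR
        have hbnd := inSub_bounds _ hR
        rw [s2] at hbnd
        obtain ⟨hA1, hA2, hB1, hB2⟩ := hbnd
        have hau : (r :: t).get i - r ∈ u2 :=
          pr.mem_iff.2 (List.mem_range'_1.2 ⟨hA1, by omega⟩)
        have hbu : (r :: t).get j - r ∈ u2 :=
          pr.mem_iff.2 (List.mem_range'_1.2 ⟨hB1, by omega⟩)
        obtain ⟨i', hi'⟩ := List.get_of_mem hau
        obtain ⟨j', hj'⟩ := List.get_of_mem hbu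
        have hgi : u2f.get (Fin.cast hlc i') = (r :: t).get i := by
          have h3 := hgm i'
          have h4 := hmemf (Fin.cast hlc i')
          omega
        have hgj : u2f.get (Fin.cast hlc j') = (r :: t).get j := by
          have h3 := hgm j'
          have h4 := hmemf (Fin.cast hlc j')
          omega
        have hlt' : j' < i' := hIH2 i' j' (by rw [hi', hj']; exact ⟨by omega, hR⟩)
        have hlt'' : Fin.cast hlc j' < Fin.cast hlc i' := by
          rw [Fin.lt_def, Fin.coe_cast, Fin.coe_cast]
          exact Fin.lt_def.1 hlt'
        exact RExt_up hsub2 hnd hgi.symm hgj.symm hlt''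

end TamariAux

namespace TamariAux

open BinTree

lemma tamari_of_inc : ∀ (m : ℕ) (v : List ℕ) (n : ℕ) (T' : BinTree), v.length ≤ m →
    v.Perm (List.range' 1 n) → T'.size = n → RExt v (incRel T') →
    TamariLE (treeOf v) T' := by
  intro m
  induction m with
  | zero =>
    intro v n T' hl hp hTn H
    have hv : v = [] := List.eq_nil_of_length_eq_zero (by omega)
    subst hv
    have := hp.length_eq
    simp only [List.length_nil, List.length_range'] at this
    have : T' = .leaf := size_eq_zero (by omega)
    rw [this, treeOf]
    exact Relation.ReflTransGen.refl
  | succ m ih =>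
    intro v n T' hl hp hTn H
    cases v with
    | nil =>
      have := hp.length_eq
      simp only [List.length_nil, List.length_range'] at this
      have : T' = .leaf := size_eq_zero (by omega)
      rw [this, treeOf]
      exact Relation.ReflTransGen.refl
    | cons r t =>
      obtain ⟨hr1, hr2, pl, pr⟩ := perm_step hp rfl
      set u1 := t.filter (fun x => decide (x < r)) with hu1
      set u2f := t.filter (fun x => decide (r < x)) with hu2f
      set u2 := u2f.map (fun x => x - r) with hu2
      have hlt : t.length ≤ m := by simp only [List.length_cons] at hl; omega
      have htv : treeOf (r :: t) = .node (treeOf u1) (treeOf u2) := by rw [treeOf]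
      have hsub1 : u1.Sublist (r :: t) :=
        (List.filter_sublist (l := t)).trans (List.sublist_cons_self r t)
      have hsub2 : u2f.Sublist (r :: t) :=
        (List.filter_sublist (l := t)).trans (List.sublist_cons_self r t)
      have hlc : u2.length = u2f.length := List.length_map _
      have hgm : ∀ k : Fin u2.length, u2.get k = u2f.get (Fin.cast hlc k) - r := by
        intro k
        simp only [List.get_eq_getElem, hu2, List.getElem_map, Fin.coe_cast]
      have hmemf : ∀ k : Fin u2f.length, r < u2f.get k := by
        intro k
        have h5 : u2f.get k ∈ u2f := List.get_mem u2f k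
        have h6 := List.mem_filter.1 h5
        simpa using h6.2
      -- the last letter r has no strict inc-ancestor in T'
      have hr3 : ∀ b, ¬ incRel T' r b := by
        rintro b ⟨hrb, hne, hs⟩
        obtain ⟨hA1, hA2, hB1, hB2⟩ := inSub_bounds _ hs
        have hbv : b ∈ r :: t := hp.mem_iff.2 (List.mem_range'_1.2 ⟨hB1, by omega⟩)
        obtain ⟨jb, hjb⟩ := List.get_of_mem hbv
        have := H ⟨0, by simp⟩ jb (by rw [hjb]; exact ⟨hrb, hne, hs⟩)
        exact Nat.not_lt_zero _ (Fin.lt_def.1 this)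
      obtain ⟨s1, s2, htam, hi1, hi2⟩ := rsplit_spec T' r hr1 (by omega) hr3
      -- linear extension properties for the two pieces
      have hE1 : RExt u1 (incRel (rsplit T' r).1) :=
        RExt_mono hi1 (RExt_sublist hsub1 H)
      have hE2 : RExt u2 (incRel (rsplit T' r).2) := by
        intro i j hr'
        have h7 := hi2 _ _ hr'
        have h3i := hgm i
        have h3j := hgm j
        have h4i := hmemf (Fin.cast hlc i)
        have h4j := hmemf (Fin.cast hlc j)
        have hei : u2f.get (Fin.cast hlc i) = u2.get i + r := by omega
        have hej : u2f.get (Fin.cast hlc j) = u2.get j + r := by omega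
        have h8 := RExt_sublist hsub2 H (Fin.cast hlc i) (Fin.cast hlc j)
          (by rw [hei, hej]; exact h7)
        rw [Fin.lt_def, Fin.coe_cast, Fin.coe_cast] at h8
        exact Fin.lt_def.2 h8
      have ihP : TamariLE (treeOf u1) (rsplit T' r).1 :=
        ih u1 (r - 1) _ (le_trans (List.length_filter_le _ _) hlt) pl s1 hE1
      have ihQ : TamariLE (treeOf u2) (rsplit T' r).2 :=
        ih u2 (n - r) _ (le_trans (le_of_eq (List.length_map _))
          (le_trans (List.length_filter_le _ _) hlt)) pr (by omega) hE2
      rw [htv]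
      exact (tamari_node ihP ihQ).trans htam

lemma tamari_of_dec : ∀ (m : ℕ) (v : List ℕ) (n : ℕ) (T : BinTree), v.length ≤ m →
    v.Perm (List.range' 1 n) → T.size = n → RExt v (decRel T) →
    TamariLE T (treeOf v) := by
  intro m
  induction m with
  | zero =>
    intro v n T hl hp hTn H
    have hv : v = [] := List.eq_nil_of_length_eq_zero (by omega)
    subst hv
    have := hp.length_eq
    simp only [List.length_nil, List.length_range'] at this
    have : T = .leaf := size_eq_zero (by omega)
    rw [this, treeOf]
    exact Relation.ReflTransGen.refl
  | succ m ih =>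
    intro v n T hl hp hTn H
    cases v with
    | nil =>
      have := hp.length_eq
      simp only [List.length_nil, List.length_range'] at this
      have : T = .leaf := size_eq_zero (by omega)
      rw [this, treeOf]
      exact Relation.ReflTransGen.refl
    | cons r t =>
      obtain ⟨hr1, hr2, pl, pr⟩ := perm_step hp rfl
      set u1 := t.filter (fun x => decide (x < r)) with hu1
      set u2f := t.filter (fun x => decide (r < x)) with hu2f
      set u2 := u2f.map (fun x => x - r) with hu2
      have hlt : t.length ≤ m := by simp only [List.length_cons] at hl; omega
      have htv : treeOf (r :: t) = .node (treeOf u1) (treeOf u2) := by rw [treeOf]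
      have hsub1 : u1.Sublist (r :: t) :=
        (List.filter_sublist (l := t)).trans (List.sublist_cons_self r t)
      have hsub2 : u2f.Sublist (r :: t) :=
        (List.filter_sublist (l := t)).trans (List.sublist_cons_self r t)
      have hlc : u2.length = u2f.length := List.length_map _
      have hgm : ∀ k : Fin u2.length, u2.get k = u2f.get (Fin.cast hlc k) - r := by
        intro k
        simp only [List.get_eq_getElem, hu2, List.getElem_map, Fin.coe_cast]
      have hmemf : ∀ k : Fin u2f.length, r < u2f.get k := by
        intro k
        have h5 : u2f.get k ∈ u2f := List.get_mem u2f k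
        have h6 := List.mem_filter.1 h5
        simpa using h6.2
      have hr3 : ∀ b, ¬ decRel T r b := by
        rintro b ⟨hrb, hne, hs⟩
        obtain ⟨hA1, hA2, hB1, hB2⟩ := inSub_bounds _ hs
        have hbv : b ∈ r :: t := hp.mem_iff.2 (List.mem_range'_1.2 ⟨hB1, by omega⟩)
        obtain ⟨jb, hjb⟩ := List.get_of_mem hbv
        have := H ⟨0, by simp⟩ jb (by rw [hjb]; exact ⟨hrb, hne, hs⟩)
        exact Nat.not_lt_zero _ (Fin.lt_def.1 this)
      obtain ⟨s1, s2, htam, hd1, hd2⟩ := lsplit_spec T r hr1 (by omega) hr3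
      have hE1 : RExt u1 (decRel (lsplit T r).1) :=
        RExt_mono hd1 (RExt_sublist hsub1 H)
      have hE2 : RExt u2 (decRel (lsplit T r).2) := by
        intro i j hr'
        have h7 := hd2 _ _ hr'
        have h3i := hgm i
        have h3j := hgm j
        have h4i := hmemf (Fin.cast hlc i)
        have h4j := hmemf (Fin.cast hlc j)
        have hei : u2f.get (Fin.cast hlc i) = u2.get i + r := by omega
        have hej : u2f.get (Fin.cast hlc j) = u2.get j + r := by omega
        have h8 := RExt_sublist hsub2 H (Fin.cast hlc i) (Fin.cast hlc j)
          (by rw [hei, hej]; exact h7)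
        rw [Fin.lt_def, Fin.coe_cast, Fin.coe_cast] at h8
        exact Fin.lt_def.2 h8
      have ihP : TamariLE (lsplit T r).1 (treeOf u1) :=
        ih u1 (r - 1) _ (le_trans (List.length_filter_le _ _) hlt) pl s1 hE1
      have ihQ : TamariLE (lsplit T r).2 (treeOf u2) :=
        ih u2 (n - r) _ (le_trans (le_of_eq (List.length_map _))
          (le_trans (List.length_filter_le _ _) hlt)) pr (by omega) hE2
      rw [htv]
      exact htam.trans (tamari_node ihP ihQ)

end TamariAux

namespace TamariAux

open BinTree

lemma word_perm (n : ℕ) (σ : Equiv.Perm (Fin n)) :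
    (((List.finRange n).map (fun i => ((σ i : ℕ) + 1))).reverse).Perm
      (List.range' 1 n) := by
  refine (List.reverse_perm _).trans ?_
  have h0 : (List.finRange n).map (fun i => ((σ i : ℕ) + 1)) =
      (((List.finRange n).map σ).map (fun k : Fin n => (k : ℕ))).map (fun x => x + 1) := by
    rw [List.map_map, List.map_map]
    rfl
  rw [h0]
  have h1 : ((List.finRange n).map σ).Perm (List.finRange n) := by
    apply List.Subperm.perm_of_length_le
    · apply List.subperm_of_subset
      · exact (List.nodup_finRange n).map σ.injective
      · intro x _; exact List.mem_finRange x
    · simp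
  have h2 : (List.range n).map (fun x => x + 1) = List.range' 1 n := by
    rw [List.range'_eq_map_range]
    apply List.map_congr_left
    intro x _; omega
  have h3 := (h1.map (fun k : Fin n => (k : ℕ))).map (fun x => x + 1)
  have h4 : ((List.finRange n).map (fun k : Fin n => (k : ℕ))).map (fun x => x + 1) =
      List.range' 1 n := by
    have h5 : (List.finRange n).map (fun k : Fin n => (k : ℕ)) = List.range n := by
      apply List.ext_getElem <;> simp
    rw [h5, h2]
  rw [h4] at h3
  exact h3

lemma isLinExt_iff (n : ℕ) (rel : ℕ → ℕ → Prop) (σ : Equiv.Perm (Fin n)) :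
    IsLinExt n rel σ ↔
      RExt (((List.finRange n).map (fun i => ((σ i : ℕ) + 1))).reverse) rel := by
  set w := (List.finRange n).map (fun i => ((σ i : ℕ) + 1)) with hw
  have hvlen : w.reverse.length = n := by simp [hw]
  have hget : ∀ (i : Fin w.reverse.length) (hk' : n - 1 - (i : ℕ) < n),
      w.reverse.get i = (σ ⟨n - 1 - (i : ℕ), hk'⟩ : ℕ) + 1 := by
    intro i hk'
    rw [List.get_eq_getElem, List.getElem_reverse]
    simp only [hw, List.getElem_map, List.getElem_finRange]
    have hlw : w.length = n := by simp [hw]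
    suffices hAB : ∀ A B : Fin n, (A : ℕ) = (B : ℕ) → ((σ A : ℕ) + 1 : ℕ) = (σ B : ℕ) + 1 by
      apply hAB
      rw [Fin.coe_cast]
      show w.length - 1 - (i : ℕ) = n - 1 - (i : ℕ)
      rw [hlw]
    intro A B hAB'
    rw [show A = B from Fin.ext hAB']
  constructor
  · intro hL i j hrel
    have hi : (i : ℕ) < n := by omega
    have hj : (j : ℕ) < n := by omega
    have hilt : n - 1 - (i : ℕ) < n := by omega
    have hjlt : n - 1 - (j : ℕ) < n := by omega
    rw [hget i hilt, hget j hjlt] at hrel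
    have := hL _ _ hrel
    rw [Fin.mk_lt_mk] at this
    rw [Fin.lt_def]
    omega
  · intro hR i j hrel
    have hi' : n - 1 - (i : ℕ) < w.reverse.length := by omega
    have hj' : n - 1 - (j : ℕ) < w.reverse.length := by omega
    have hii : n - 1 - (n - 1 - (i : ℕ)) < n := by omega
    have hjj : n - 1 - (n - 1 - (j : ℕ)) < n := by omega
    have egi : w.reverse.get ⟨n - 1 - (i : ℕ), hi'⟩ = (σ i : ℕ) + 1 := by
      rw [hget _ hii]
      have harg : (⟨n - 1 - ((⟨n - 1 - (i : ℕ), hi'⟩ : Fin w.reverse.length) : ℕ), hii⟩ :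
          Fin n) = i := by
        apply Fin.ext
        show n - 1 - (n - 1 - (i : ℕ)) = (i : ℕ)
        omega
      rw [harg]
    have egj : w.reverse.get ⟨n - 1 - (j : ℕ), hj'⟩ = (σ j : ℕ) + 1 := by
      rw [hget _ hjj]
      have harg : (⟨n - 1 - ((⟨n - 1 - (j : ℕ), hj'⟩ : Fin w.reverse.length) : ℕ), hjj⟩ :
          Fin n) = j := by
        apply Fin.ext
        show n - 1 - (n - 1 - (j : ℕ)) = (j : ℕ)
        omega
      rw [harg]
    have := hR ⟨n - 1 - (i : ℕ), hi'⟩ ⟨n - 1 - (j : ℕ), hj'⟩ (by rw [egi, egj]; exact hrel)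
    rw [Fin.mk_lt_mk] at this
    rw [Fin.lt_def]
    omega

end TamariAux

open TamariAux

/-- Let `T ≤ T'` be binary trees of size `n` in the Tamari order and let
`IP[T,T']` be the poset on `{1,…,n}` whose relations are exactly those of `dec(T)` together
with those of `inc(T')`. The linear extensions of `IP[T,T']` are exactly the linear
extensions of the trees in the Tamari interval `[T,T']`. -/
theorem linExt_intervalPoset (T T' : BinTree) (h : TamariLE T T')
    (σ : Equiv.Perm (Fin T.size)) :
    IsLinExt T.size (IPrel T T') σ ↔
      ∃ S : BinTree, S.size = T.size ∧ TamariLE T S ∧ TamariLE S T' ∧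
        IsLinExt T.size (bstRel S) σ := by
  have hperm : (((List.finRange T.size).map (fun i => ((σ i : ℕ) + 1))).reverse).Perm
      (List.range' 1 T.size) := word_perm T.size σ
  set v := ((List.finRange T.size).map (fun i => ((σ i : ℕ) + 1))).reverse with hv
  have hT'n : T'.size = T.size := (size_tamari h).symm
  constructor
  · intro hext
    have hR : RExt v (IPrel T T') := (isLinExt_iff T.size _ σ).1 hext
    have hdec : RExt v (decRel T) := RExt_mono (fun a b hd => Or.inl hd) hR
    have hinc : RExt v (incRel T') := RExt_mono (fun a b hi => Or.inr hi) hR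
    refine ⟨treeOf v, size_treeOf v.length v T.size le_rfl hperm, ?_, ?_, ?_⟩
    · exact tamari_of_dec v.length v T.size T le_rfl hperm rfl hdec
    · exact tamari_of_inc v.length v T.size T' le_rfl hperm hT'n hinc
    · exact (isLinExt_iff T.size _ σ).2 (RExt_bst v.length v T.size le_rfl hperm)
  · rintro ⟨S, hSsize, hTS, hST, hlin⟩
    intro i j hr
    rcases hr with hd | hi
    · exact hlin i j (dec_tamari hTS hd).2
    · exact hlin i j (inc_tamari hST hi).2
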